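/- Fix natural numbers 1 ≤ ℓ ≤ k ≤ r, and let F be a family of k-element subsets of the natural numbers such that no member of F contains two elements congruent modulo r. If |F| = C(r,k)·x^k for some real x ≥ 0, then the ℓ-shadow of F satisfies |∂_ℓ(F)| ≥ C(r,ℓ)·x^ℓ. -/

import Mathlib

open Finset Real
namespace FFK

variable (F : Finset (Finset ℕ)) (k : ℕ)

def lev (j : ℕ) : Finset (Finset ℕ) := F.biUnion fun s => s.powersetCard j

def deg (t : Finset ℕ) : ℕ := #(F.filter fun s => t ⊆ s)

noncomputable def P (j : ℕ) (t : Finset ℕ) : ℝ := (deg F t : ℝ) / ((F.card : ℝ) * (k.choose j : ℝ))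

noncomputable def HH (j : ℕ) : ℝ := ∑ t ∈ lev F j, Real.negMulLog (P F k j t)

variable {F k}

lemma mem_lev {j t} : t ∈ lev F j ↔ ∃ s ∈ F, t ⊆ s ∧ t.card = j := by
  simp [lev, Finset.mem_biUnion, Finset.mem_powersetCard, and_assoc]

lemma card_of_mem_lev {j t} (h : t ∈ lev F j) : t.card = j :=
  ((mem_lev.1 h).choose_spec.2.2)

lemma subset_mem_lev {J I : ℕ} {t u : Finset ℕ} (ht : t ∈ lev F J) (hu : u ⊆ t)
    (hc : u.card = I) : u ∈ lev F I := by
  obtain ⟨s, hs, hts, -⟩ := mem_lev.1 ht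
  exact mem_lev.2 ⟨s, hs, hu.trans hts, hc⟩

lemma P_nonneg (j t) : 0 ≤ P F k j t := by
  unfold P; positivity

lemma swap_sum {I J : ℕ} (g : Finset ℕ → Finset ℕ → ℝ) :
    ∑ s ∈ lev F J, ∑ t ∈ s.powersetCard I, g t s
      = ∑ t ∈ lev F I, ∑ s ∈ (lev F J).filter (t ⊆ ·), g t s := by
  have h1 : ∀ s ∈ lev F J, ∑ t ∈ s.powersetCard I, g t s
      = ∑ t ∈ lev F I, if t ⊆ s then g t s else 0 := by
    intro s hs
    rw [← Finset.sum_filter]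
    apply Finset.sum_congr _ (fun _ _ => rfl)
    ext u
    simp only [Finset.mem_powersetCard, Finset.mem_filter]
    constructor
    · rintro ⟨h1, h2⟩; exact ⟨subset_mem_lev hs h1 h2, h1⟩
    · rintro ⟨h1, h2⟩; exact ⟨h2, card_of_mem_lev h1⟩
  rw [Finset.sum_congr rfl h1, Finset.sum_comm]
  exact Finset.sum_congr rfl fun t _ => (Finset.sum_filter _ _).symm

lemma insert_injOn {t f : Finset ℕ} :
    ∀ a ∈ f \ t, ∀ b ∈ f \ t, insert a t = insert b t → a = b := by
  intro a ha b hb hab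
  have ha' := (Finset.mem_sdiff.1 ha).2
  by_contra hne
  have : a ∈ insert b t := by rw [← hab]; exact Finset.mem_insert_self a t
  rcases Finset.mem_insert.1 this with h | h
  · exact hne h
  · exact ha' h

lemma between_eq_image {t f : Finset ℕ} (htf : t ⊆ f) {j : ℕ} (htc : t.card = j) :
    (f.powersetCard (j+1)).filter (t ⊆ ·) = (f \ t).image (fun β => insert β t) := by
  ext s
  simp only [Finset.mem_filter, Finset.mem_powersetCard, Finset.mem_image, Finset.mem_sdiff]
  constructor
  · rintro ⟨⟨hsf, hsc⟩, hts⟩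
    have h1 : (s \ t).card = 1 := by
      rw [Finset.card_sdiff_of_subset hts, hsc, htc]; omega
    obtain ⟨β, hβ⟩ := Finset.card_eq_one.1 h1
    have hβs : β ∈ s \ t := hβ ▸ Finset.mem_singleton_self β
    refine ⟨β, ⟨hsf (Finset.mem_sdiff.1 hβs).1, (Finset.mem_sdiff.1 hβs).2⟩, ?_⟩
    have h2 := Finset.sdiff_union_of_subset hts
    rw [hβ] at h2
    rw [← h2, Finset.insert_eq]
  · rintro ⟨β, ⟨hβf, hβt⟩, rfl⟩
    refine ⟨⟨Finset.insert_subset hβf htf, ?_⟩, Finset.subset_insert _ _⟩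
    rw [Finset.card_insert_of_notMem hβt, htc]

lemma count_between {t f : Finset ℕ} (htf : t ⊆ f) {j : ℕ} (htc : t.card = j) :
    ((f.powersetCard (j+1)).filter (t ⊆ ·)).card = f.card - j := by
  rw [between_eq_image htf htc, Finset.card_image_of_injOn insert_injOn,
    Finset.card_sdiff_of_subset htf, htc]

lemma deg_expand (s : Finset ℕ) : deg F s = ∑ f ∈ F, if s ⊆ f then 1 else 0 :=
  Finset.card_filter _ _

lemma deg_step (hsize : ∀ s ∈ F, s.card = k) {j : ℕ} {t : Finset ℕ}
    (htc : t.card = j) :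
    ∑ s ∈ (lev F (j+1)).filter (t ⊆ ·), deg F s = (k - j) * deg F t := by
  classical
  calc ∑ s ∈ (lev F (j+1)).filter (t ⊆ ·), deg F s
      = ∑ f ∈ F, ∑ s ∈ (lev F (j+1)).filter (t ⊆ ·), (if s ⊆ f then 1 else 0) := by
        rw [Finset.sum_comm]; exact Finset.sum_congr rfl fun s _ => deg_expand s
    _ = ∑ f ∈ F, ((f.powersetCard (j+1)).filter (t ⊆ ·)).card := by
        apply Finset.sum_congr rfl
        intro f hf
        rw [← Finset.sum_filter]
        rw [Finset.sum_const, smul_eq_mul, mul_one]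
        congr 1
        ext s
        simp only [Finset.mem_filter, Finset.mem_powersetCard]
        constructor
        · rintro ⟨⟨hs1, hs2⟩, hsf⟩
          exact ⟨⟨hsf, card_of_mem_lev hs1⟩, hs2⟩
        · rintro ⟨⟨hsf, hsc⟩, hts⟩
          exact ⟨⟨mem_lev.2 ⟨f, hf, hsf, hsc⟩, hts⟩, hsf⟩
    _ = ∑ f ∈ F.filter (t ⊆ ·), (k - j) := by
        rw [← Finset.sum_filter_add_sum_filter_not F (t ⊆ ·)]
        have h2 : ∀ f ∈ F.filter (fun f => ¬ t ⊆ f),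
            ((f.powersetCard (j+1)).filter (t ⊆ ·)).card = 0 := by
          intro f hf
          obtain ⟨hfF, hntf⟩ := Finset.mem_filter.1 hf
          rw [Finset.card_eq_zero]
          ext s
          simp only [Finset.mem_filter, Finset.mem_powersetCard, Finset.notMem_empty,
            iff_false, not_and]
          rintro ⟨hsf, -⟩ hts
          exact hntf (hts.trans hsf)
        rw [Finset.sum_congr rfl h2, Finset.sum_const, smul_eq_mul, mul_zero, add_zero]
        apply Finset.sum_congr rfl
        intro f hf
        obtain ⟨hfF, htf⟩ := Finset.mem_filter.1 hf
        rw [count_between htf htc, hsize f hfF]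
    _ = (k - j) * deg F t := by
        rw [Finset.sum_const, smul_eq_mul, mul_comm]; rfl


lemma choose_cast {j : ℕ} (hj : j < k) :
    (k.choose (j+1) : ℝ) * ((j:ℝ)+1) = (k.choose j : ℝ) * ((k:ℝ) - (j:ℝ)) := by
  have := Nat.choose_succ_right_eq k j
  have h2 : ((k.choose (j+1)) * (j+1) : ℕ) = ((k.choose j) * (k - j) : ℕ) := this
  have h3 := congrArg (Nat.cast (R := ℝ)) h2
  push_cast [Nat.cast_sub hj.le] at h3
  linear_combination h3

lemma KM (hsize : ∀ s ∈ F, s.card = k) {j : ℕ} {t : Finset ℕ}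
    (hj : j < k) (htc : t.card = j) :
    ∑ s ∈ (lev F (j+1)).filter (t ⊆ ·), P F k (j+1) s = ((j:ℝ)+1) * P F k j t := by
  have hsum : ∑ s ∈ (lev F (j+1)).filter (t ⊆ ·), (deg F s : ℝ)
      = ((k:ℝ) - (j:ℝ)) * (deg F t : ℝ) := by
    have := congrArg (Nat.cast (R := ℝ)) (deg_step hsize htc (F := F) (k := k))
    push_cast [Nat.cast_sub hj.le] at this
    convert this using 1
  unfold P
  rw [← Finset.sum_div, hsum]
  rcases Nat.eq_zero_or_pos F.card with h0 | h0
  · have hdeg : deg F t = 0 := by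
      have : F = ∅ := Finset.card_eq_zero.1 h0
      simp [deg, this]
    simp [hdeg]
  · have hb : (F.card : ℝ) ≠ 0 := by positivity
    have hc0 : (k.choose j : ℝ) ≠ 0 := by
      have := Nat.choose_pos hj.le; positivity
    have hc1 : (k.choose (j+1) : ℝ) ≠ 0 := by
      have := Nat.choose_pos hj; positivity
    have hch := choose_cast (k := k) hj
    rw [← mul_div_assoc, div_eq_div_iff (by positivity) (by positivity)]
    linear_combination (-((deg F t : ℝ) * (F.card : ℝ))) * hch

lemma lev_k (hsize : ∀ s ∈ F, s.card = k) : lev F k = F := by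
  ext s
  rw [mem_lev]
  constructor
  · rintro ⟨f, hf, hsf, hsc⟩
    have : s = f := Finset.eq_of_subset_of_card_le hsf (by rw [hsize f hf, hsc])
    rwa [this]
  · intro hs
    exact ⟨s, hs, Finset.Subset.refl s, hsize s hs⟩

lemma deg_self (hsize : ∀ s ∈ F, s.card = k) {s : Finset ℕ} (hs : s ∈ F) : deg F s = 1 := by
  have : F.filter (fun f => s ⊆ f) = {s} := by
    ext f
    simp only [Finset.mem_filter, Finset.mem_singleton]
    constructor
    · rintro ⟨hf, hsub⟩
      exact (Finset.eq_of_subset_of_card_le hsub (by rw [hsize f hf, hsize s hs])).symm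
    · rintro rfl; exact ⟨hs, Finset.Subset.refl _⟩
  unfold deg
  rw [this, Finset.card_singleton]

lemma sum_P (hsize : ∀ s ∈ F, s.card = k) (hF : F.Nonempty) {j : ℕ} (hj : j ≤ k) :
    ∑ t ∈ lev F j, P F k j t = 1 := by
  obtain ⟨d, hd⟩ : ∃ d, j + d = k := ⟨k - j, by omega⟩
  clear hj
  induction d generalizing j with
  | zero =>
    have hjk : j = k := by omega
    rw [hjk, lev_k hsize]
    have : ∀ s ∈ F, P F k k s = ((F.card : ℝ))⁻¹ := by
      intro s hs
      unfold P
      rw [deg_self hsize hs, Nat.choose_self]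
      push_cast; rw [mul_one, one_div]
    rw [Finset.sum_congr rfl this, Finset.sum_const, nsmul_eq_mul]
    have hb : (F.card : ℝ) ≠ 0 := by
      exact_mod_cast (Finset.card_pos.2 hF).ne'
    field_simp
  | succ d ih =>
    have hjk : j < k := by omega
    have hstep : ∀ t ∈ lev F j, P F k j t
        = (((j:ℝ)+1))⁻¹ * ∑ s ∈ (lev F (j+1)).filter (t ⊆ ·), P F k (j+1) s := by
      intro t ht
      rw [KM hsize hjk (card_of_mem_lev ht)]
      field_simp
    rw [Finset.sum_congr rfl hstep, ← Finset.mul_sum, ← swap_sum]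
    have hinner : ∀ s ∈ lev F (j+1), ∑ _t ∈ s.powersetCard j, P F k (j+1) s
        = ((j:ℝ)+1) * P F k (j+1) s := by
      intro s hs
      rw [Finset.sum_const, nsmul_eq_mul, Finset.card_powersetCard, card_of_mem_lev hs,
        Nat.choose_succ_self_right]
      push_cast; ring
    rw [Finset.sum_congr rfl hinner, ← Finset.mul_sum, ih (j := j+1) (by omega), mul_one]
    field_simp


lemma gibbs_pointwise {a b : ℝ} (ha : 0 ≤ a) (hb : 0 ≤ b) (h : a ≠ 0 → b ≠ 0) :
    a * (Real.log b - Real.log a) ≤ b - a := by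
  rcases eq_or_lt_of_le ha with h0 | h0
  · rw [← h0]; simpa using hb
  · have hb' : 0 < b := lt_of_le_of_ne hb (Ne.symm (h h0.ne'))
    have hlog : Real.log (b/a) ≤ b/a - 1 := Real.log_le_sub_one_of_pos (by positivity)
    rw [Real.log_div hb'.ne' h0.ne'] at hlog
    have := mul_le_mul_of_nonneg_left hlog h0.le
    calc a * (Real.log b - Real.log a) ≤ a * (b/a - 1) := this
      _ = b - a := by field_simp

lemma sum_negMulLog_le_log_card {ι : Type*} {A : Finset ι} {p : ι → ℝ}
    (hp : ∀ i ∈ A, 0 ≤ p i) (hsum : ∑ i ∈ A, p i = 1) :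
    ∑ i ∈ A, Real.negMulLog (p i) ≤ Real.log A.card := by
  have hA : A.Nonempty := by
    rcases A.eq_empty_or_nonempty with h | h
    · exfalso; rw [h] at hsum; simp at hsum
    · exact h
  have hcard : (0:ℝ) < A.card := by exact_mod_cast Finset.card_pos.2 hA
  have key : ∀ i ∈ A, Real.negMulLog (p i)
      ≤ p i * Real.log A.card + (((A.card : ℝ))⁻¹ - p i) := by
    intro i hi
    have hg := gibbs_pointwise (hp i hi) (b := ((A.card : ℝ))⁻¹) (by positivity)
      (fun _ => by positivity)
    rw [Real.log_inv] at hg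
    have : Real.negMulLog (p i) = p i * (-Real.log (A.card) - Real.log (p i))
        + p i * Real.log A.card := by
      rw [Real.negMulLog]; ring
    rw [this]
    linarith
  calc ∑ i ∈ A, Real.negMulLog (p i)
      ≤ ∑ i ∈ A, (p i * Real.log A.card + (((A.card : ℝ))⁻¹ - p i)) :=
        Finset.sum_le_sum key
    _ = Real.log A.card := by
        rw [Finset.sum_add_distrib, ← Finset.sum_mul, hsum, Finset.sum_sub_distrib,
          Finset.sum_const, hsum, nsmul_eq_mul]
        field_simp; ring

lemma negMulLog_div_const {x c : ℝ} (hc : 0 < c) :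
    c * Real.negMulLog (x / c) = Real.negMulLog x + x * Real.log c := by
  rcases eq_or_ne x 0 with rfl | hx
  · simp
  · rw [Real.negMulLog, Real.negMulLog, Real.log_div hx hc.ne']
    field_simp; ring


lemma P_top (hsize : ∀ s ∈ F, s.card = k) {s : Finset ℕ} (hs : s ∈ F) :
    P F k k s = ((F.card : ℝ))⁻¹ := by
  unfold P
  rw [deg_self hsize hs, Nat.choose_self]
  push_cast; rw [mul_one, one_div]

lemma HH_top (hsize : ∀ s ∈ F, s.card = k) (hF : F.Nonempty) :
    HH F k k = Real.log F.card := by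
  unfold HH
  rw [lev_k hsize]
  have hb : (0:ℝ) < F.card := by exact_mod_cast Finset.card_pos.2 hF
  have : ∀ s ∈ F, Real.negMulLog (P F k k s) = (F.card : ℝ)⁻¹ * Real.log F.card := by
    intro s hs
    rw [P_top hsize hs, Real.negMulLog, Real.log_inv]
    ring
  rw [Finset.sum_congr rfl this, Finset.sum_const, nsmul_eq_mul]
  field_simp

lemma P_le_succ (hsize : ∀ s ∈ F, s.card = k) {j : ℕ} (hj : j < k) {t s : Finset ℕ}
    (htc : t.card = j) (hs : s ∈ lev F (j+1)) (hts : t ⊆ s) :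
    P F k (j+1) s ≤ ((j:ℝ)+1) * P F k j t := by
  rw [← KM hsize hj htc]
  exact Finset.single_le_sum (f := fun s => P F k (j+1) s) (fun i _ => P_nonneg _ _)
    (Finset.mem_filter.2 ⟨hs, hts⟩)

lemma sum_pair_other {D : Finset ℕ} (hD : D.card = 2) (u : Finset ℕ) (f : Finset ℕ → ℝ) :
    ∑ β ∈ D, f (u ∪ D.erase β) = ∑ β ∈ D, f (insert β u) := by
  obtain ⟨a, b, hab, rfl⟩ := Finset.card_eq_two.1 hD
  rw [Finset.sum_pair hab, Finset.sum_pair hab]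
  have e1 : ({a, b} : Finset ℕ).erase a = {b} :=
    Finset.erase_insert (by simp [hab])
  have e2 : ({a, b} : Finset ℕ).erase b = {a} := by
    rw [Finset.pair_comm]
    exact Finset.erase_insert (by simp [Ne.symm hab])
  rw [e1, e2]
  have e3 : ∀ c : ℕ, u ∪ {c} = insert c u := by
    intro c; rw [Finset.union_comm, ← Finset.insert_eq]
  rw [e3 a, e3 b, add_comm]

/-- conversion between (t,u)-chain coordinates and (u,β) coordinates inside a fixed s -/
lemma conv_sum {s : Finset ℕ} {i : ℕ} (hs : s.card = i + 2) (h : Finset ℕ → Finset ℕ → ℝ) :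
    ∑ t ∈ s.powersetCard (i+1), ∑ u ∈ t.powersetCard i, h u t
      = ∑ u ∈ s.powersetCard i, ∑ β ∈ s \ u, h u (insert β u) := by
  have h1 : ∀ t ∈ s.powersetCard (i+1), ∑ u ∈ t.powersetCard i, h u t
      = ∑ u ∈ s.powersetCard i, if u ⊆ t then h u t else 0 := by
    intro t ht
    rw [← Finset.sum_filter]
    apply Finset.sum_congr _ (fun _ _ => rfl)
    obtain ⟨hts, htc⟩ := Finset.mem_powersetCard.1 ht
    ext u
    simp only [Finset.mem_powersetCard, Finset.mem_filter]
    constructor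
    · rintro ⟨h1, h2⟩; exact ⟨⟨h1.trans hts, h2⟩, h1⟩
    · rintro ⟨⟨h1, h2⟩, h3⟩; exact ⟨h3, h2⟩
  rw [Finset.sum_congr rfl h1, Finset.sum_comm]
  apply Finset.sum_congr rfl
  intro u hu
  obtain ⟨hus, huc⟩ := Finset.mem_powersetCard.1 hu
  rw [← Finset.sum_filter, between_eq_image hus huc, Finset.sum_image insert_injOn]

/-- triple sum over chains u ⊂ t ⊂ s at levels i, i+1, i+2 -/
noncomputable def T3 (G : Finset (Finset ℕ)) (kk i : ℕ) (g : Finset ℕ → Finset ℕ → Finset ℕ → ℝ) : ℝ :=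
  ∑ s ∈ lev G (i+2), ∑ t ∈ s.powersetCard (i+1), ∑ u ∈ t.powersetCard i, g u t s

def tstar (u t s : Finset ℕ) : Finset ℕ := u ∪ (s \ t)

/-- representation with u outermost -/
lemma T3_u_outer {i : ℕ} (g : Finset ℕ → Finset ℕ → Finset ℕ → ℝ) :
    T3 F k i g = ∑ u ∈ lev F i, ∑ t ∈ (lev F (i+1)).filter (u ⊆ ·),
      ∑ s ∈ (lev F (i+2)).filter (t ⊆ ·), g u t s := by
  unfold T3
  rw [swap_sum (fun t s => ∑ u ∈ t.powersetCard i, g u t s)]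
  have h1 : ∀ t ∈ lev F (i+1),
      ∑ s ∈ (lev F (i+2)).filter (t ⊆ ·), ∑ u ∈ t.powersetCard i, g u t s
      = ∑ u ∈ t.powersetCard i, ∑ s ∈ (lev F (i+2)).filter (t ⊆ ·), g u t s := by
    intro t _; exact Finset.sum_comm
  rw [Finset.sum_congr rfl h1]
  exact swap_sum (fun u t => ∑ s ∈ (lev F (i+2)).filter (t ⊆ ·), g u t s)

/-- triple sum of a function of (t,s) only -/
lemma T3_te {i : ℕ} (e g : Finset ℕ → ℝ) :
    T3 F k i (fun _u t s => e s * g t)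
      = ∑ t ∈ lev F (i+1), (((i:ℝ)+1) * g t) * ∑ s ∈ (lev F (i+2)).filter (t ⊆ ·), e s := by
  unfold T3
  rw [swap_sum (fun t s => ∑ _u ∈ t.powersetCard i, e s * g t)]
  apply Finset.sum_congr rfl
  intro t ht
  have hc : ∀ s ∈ (lev F (i+2)).filter (t ⊆ ·),
      ∑ _u ∈ t.powersetCard i, e s * g t = (((i:ℝ)+1) * g t) * e s := by
    intro s _
    rw [Finset.sum_const, Finset.card_powersetCard, card_of_mem_lev ht,
      Nat.choose_succ_self_right, nsmul_eq_mul]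
    push_cast; ring
  rw [Finset.sum_congr rfl hc, ← Finset.mul_sum]

/-- triple sum of a function of s only -/
lemma T3_e {i : ℕ} (e : Finset ℕ → ℝ) :
    T3 F k i (fun _u _t s => e s)
      = (((i:ℝ)+2) * ((i:ℝ)+1)) * ∑ s ∈ lev F (i+2), e s := by
  unfold T3
  rw [Finset.mul_sum]
  apply Finset.sum_congr rfl
  intro s hs
  have h1 : ∀ t ∈ s.powersetCard (i+1), ∑ _u ∈ t.powersetCard i, e s = ((i:ℝ)+1) * e s := by
    intro t ht
    rw [Finset.sum_const, Finset.card_powersetCard, (Finset.mem_powersetCard.1 ht).2,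
      Nat.choose_succ_self_right, nsmul_eq_mul]
    push_cast; ring
  rw [Finset.sum_congr rfl h1, Finset.sum_const, Finset.card_powersetCard,
    card_of_mem_lev hs, Nat.choose_succ_self_right, nsmul_eq_mul]
  push_cast; ring

lemma sdiff_insert_comm (s u : Finset ℕ) (β : ℕ) :
    s \ insert β u = (s \ u).erase β := by
  ext x
  simp only [Finset.mem_sdiff, Finset.mem_insert, Finset.mem_erase]
  tauto

/-- symmetry: replacing t by its mirror tstar -/
lemma T3_sym {i : ℕ} (e g : Finset ℕ → ℝ) :
    T3 F k i (fun u t s => e s * g (tstar u t s))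
      = T3 F k i (fun _u t s => e s * g t) := by
  unfold T3
  apply Finset.sum_congr rfl
  intro s hs
  have hsc := card_of_mem_lev hs
  rw [conv_sum hsc (fun u t => e s * g (tstar u t s)), conv_sum hsc (fun _u t => e s * g t)]
  apply Finset.sum_congr rfl
  intro u hu
  obtain ⟨hus, huc⟩ := Finset.mem_powersetCard.1 hu
  have hD : (s \ u).card = 2 := by
    rw [Finset.card_sdiff_of_subset hus, hsc, huc]; omega
  have h1 : ∀ β ∈ s \ u, e s * g (tstar u (insert β u) s)
      = e s * g (u ∪ ((s \ u).erase β)) := by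
    intro β _
    rw [tstar, sdiff_insert_comm]
  rw [Finset.sum_congr rfl h1]
  exact sum_pair_other hD u (fun z => e s * g z)

lemma mul_log_div {x c : ℝ} (hc : c ≠ 0) :
    x * Real.log (x / c) = x * Real.log x - x * Real.log c := by
  rcases eq_or_ne x 0 with rfl | hx
  · simp
  · rw [Real.log_div hx hc]; ring

lemma T3_w {i : ℕ} (hsize : ∀ s ∈ F, s.card = k) (hF : F.Nonempty) (hik : i + 2 ≤ k) :
    T3 F k i (fun _u _t s => P F k (i+2) s / (((i:ℝ)+2) * ((i:ℝ)+1))) = 1 := by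
  rw [T3_e, ← Finset.sum_div, sum_P hsize hF hik]
  have hc : (((i:ℝ)+2) * ((i:ℝ)+1)) ≠ 0 := by positivity
  field_simp

lemma T3_wlogw {i : ℕ} (hsize : ∀ s ∈ F, s.card = k) (hF : F.Nonempty) (hik : i + 2 ≤ k) :
    T3 F k i (fun _u _t s =>
        (P F k (i+2) s / (((i:ℝ)+2) * ((i:ℝ)+1)))
          * Real.log (P F k (i+2) s / (((i:ℝ)+2) * ((i:ℝ)+1))))
      = - HH F k (i+2) - Real.log (((i:ℝ)+2) * ((i:ℝ)+1)) := by
  set c : ℝ := ((i:ℝ)+2) * ((i:ℝ)+1) with hc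
  have hc0 : (0:ℝ) < c := by positivity
  rw [T3_e]
  have h1 : ∀ s ∈ lev F (i+2),
      P F k (i+2) s / c * Real.log (P F k (i+2) s / c)
        = -(Real.negMulLog (P F k (i+2) s / c)) := by
    intro s _; rw [Real.negMulLog]; ring
  rw [Finset.sum_congr rfl h1, Finset.sum_neg_distrib, mul_neg, Finset.mul_sum]
  have h2 : ∀ s ∈ lev F (i+2), c * Real.negMulLog (P F k (i+2) s / c)
      = Real.negMulLog (P F k (i+2) s) + P F k (i+2) s * Real.log c := by
    intro s _; exact negMulLog_div_const hc0
  rw [Finset.sum_congr rfl h2, Finset.sum_add_distrib, ← Finset.sum_mul,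
    sum_P hsize hF hik]
  unfold HH; ring

lemma T3_piece1 {i : ℕ} (hsize : ∀ s ∈ F, s.card = k) (hF : F.Nonempty) (hik : i + 2 ≤ k) :
    T3 F k i (fun _u t s =>
        (P F k (i+2) s / (((i:ℝ)+2) * ((i:ℝ)+1)))
          * Real.log (P F k (i+1) t / ((i:ℝ)+1)))
      = - HH F k (i+1) - Real.log ((i:ℝ)+1) := by
  set c : ℝ := ((i:ℝ)+2) * ((i:ℝ)+1) with hc
  have hc0 : (0:ℝ) < c := by positivity
  rw [T3_te]
  have h1 : ∀ t ∈ lev F (i+1),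
      (((i:ℝ)+1) * Real.log (P F k (i+1) t / ((i:ℝ)+1)))
          * ∑ s ∈ (lev F (i+2)).filter (t ⊆ ·), P F k (i+2) s / c
      = P F k (i+1) t * Real.log (P F k (i+1) t / ((i:ℝ)+1)) := by
    intro t ht
    rw [← Finset.sum_div, KM hsize (by omega) (card_of_mem_lev ht)]
    push_cast
    field_simp
    ring
  rw [Finset.sum_congr rfl h1]
  have h2 : ∀ t ∈ lev F (i+1),
      P F k (i+1) t * Real.log (P F k (i+1) t / ((i:ℝ)+1))
      = -(Real.negMulLog (P F k (i+1) t)) - P F k (i+1) t * Real.log ((i:ℝ)+1) := by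
    intro t _
    rw [mul_log_div (by positivity), Real.negMulLog]; ring
  rw [Finset.sum_congr rfl h2, Finset.sum_sub_distrib, Finset.sum_neg_distrib,
    ← Finset.sum_mul, sum_P hsize hF (by omega)]
  unfold HH; ring

lemma T3_piece3 {i : ℕ} (hsize : ∀ s ∈ F, s.card = k) (hF : F.Nonempty) (hik : i + 2 ≤ k) :
    T3 F k i (fun u _t s =>
        (P F k (i+2) s / (((i:ℝ)+2) * ((i:ℝ)+1))) * Real.log (P F k i u))
      = - HH F k i := by
  set c : ℝ := ((i:ℝ)+2) * ((i:ℝ)+1) with hc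
  have hc0 : (0:ℝ) < c := by positivity
  rw [T3_u_outer]
  have h1 : ∀ u ∈ lev F i,
      ∑ t ∈ (lev F (i+1)).filter (u ⊆ ·), ∑ s ∈ (lev F (i+2)).filter (t ⊆ ·),
        (P F k (i+2) s / c) * Real.log (P F k i u)
      = P F k i u * Real.log (P F k i u) := by
    intro u hu
    have h2 : ∀ t ∈ (lev F (i+1)).filter (u ⊆ ·),
        ∑ s ∈ (lev F (i+2)).filter (t ⊆ ·), (P F k (i+2) s / c) * Real.log (P F k i u)
        = (((i:ℝ)+2) / c * Real.log (P F k i u)) * P F k (i+1) t := by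
      intro t ht
      rw [← Finset.sum_mul, ← Finset.sum_div,
        KM hsize (by omega) (card_of_mem_lev (Finset.mem_filter.1 ht).1)]
      push_cast; ring
    rw [Finset.sum_congr rfl h2, ← Finset.mul_sum,
      KM hsize (by omega) (card_of_mem_lev hu)]
    field_simp
    ring
  rw [Finset.sum_congr rfl h1]
  unfold HH
  rw [← Finset.sum_neg_distrib]
  apply Finset.sum_congr rfl
  intro u _
  rw [Real.negMulLog]; ring

lemma diff_singleton {u t : Finset ℕ} (hut : u ⊆ t) (hc : t.card = u.card + 1) :
    ∃ β, t \ u = {β} ∧ β ∈ t ∧ β ∉ u ∧ t = insert β u := by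
  have h1 : (t \ u).card = 1 := by rw [Finset.card_sdiff_of_subset hut]; omega
  obtain ⟨β, hβ⟩ := Finset.card_eq_one.1 h1
  have hβm : β ∈ t \ u := hβ ▸ Finset.mem_singleton_self β
  refine ⟨β, hβ, (Finset.mem_sdiff.1 hβm).1, (Finset.mem_sdiff.1 hβm).2, ?_⟩
  have h2 := Finset.sdiff_union_of_subset hut
  rw [hβ] at h2
  rw [← h2, Finset.insert_eq]

lemma lev_inj {r : ℕ} (hcol : ∀ s ∈ F, ∀ a ∈ s, ∀ b ∈ s, a ≠ b → a % r ≠ b % r)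
    {j : ℕ} {t : Finset ℕ} (ht : t ∈ lev F j) :
    ∀ a ∈ t, ∀ b ∈ t, a % r = b % r → a = b := by
  obtain ⟨f, hf, htf, -⟩ := mem_lev.1 ht
  intro a ha b hb hab
  by_contra hne
  exact hcol f hf a (htf ha) b (htf hb) hne hab

lemma T3_v_le {r : ℕ} (hsize : ∀ s ∈ F, s.card = k)
    (hcol : ∀ s ∈ F, ∀ a ∈ s, ∀ b ∈ s, a ≠ b → a % r ≠ b % r)
    (hF : F.Nonempty) {i m : ℕ} (hik : i + 2 ≤ k) (hm : i + 1 + m = r) (hm1 : 1 ≤ m) :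
    T3 F k i (fun u t s =>
      (P F k (i+1) t / ((i:ℝ)+1)) * (P F k (i+1) (tstar u t s) / ((i:ℝ)+1)) / P F k i u
        * (((m:ℝ)+1) / (m:ℝ))) ≤ 1 := by
  have hr0 : 0 < r := by omega
  rw [T3_u_outer]
  have key : ∀ u ∈ lev F i,
      ∑ t ∈ (lev F (i+1)).filter (u ⊆ ·), ∑ s ∈ (lev F (i+2)).filter (t ⊆ ·),
        ((P F k (i+1) t / ((i:ℝ)+1)) * (P F k (i+1) (tstar u t s) / ((i:ℝ)+1)) / P F k i u
          * (((m:ℝ)+1) / (m:ℝ)))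
      ≤ P F k i u := by
    intro u hu
    have huc : u.card = i := card_of_mem_lev hu
    set E := (lev F (i+1)).filter (u ⊆ ·) with hE
    set h : Finset ℕ → ℝ := fun t => P F k (i+1) t / ((i:ℝ)+1) with hh
    have hhnn : ∀ t, 0 ≤ h t := fun t => by
      rw [hh]; have := P_nonneg (F := F) (k := k) (i+1) t; positivity
    set ρ : Finset ℕ → ℕ := fun t => (t \ u).sum (fun β => β % r) with hρ
    -- basic facts about members of E
    have hEfact : ∀ t ∈ E, ∃ β, t \ u = {β} ∧ β ∈ t ∧ β ∉ u ∧ t = insert β u ∧ ρ t = β % r := by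
      intro t ht
      obtain ⟨ht1, ht2⟩ := Finset.mem_filter.1 ht
      obtain ⟨β, hβ1, hβ2, hβ3, hβ4⟩ := diff_singleton ht2 (by rw [card_of_mem_lev ht1, huc])
      exact ⟨β, hβ1, hβ2, hβ3, hβ4, by simp only [hρ]; rw [hβ1]; simp⟩
    -- the inner bound over s
    have inner_bound : ∀ t ∈ E,
        ∑ s ∈ (lev F (i+2)).filter (t ⊆ ·), h (tstar u t s)
          ≤ ∑ t₂ ∈ E.filter (fun t₂ => ρ t₂ ≠ ρ t), h t₂ := by
      intro t ht
      obtain ⟨ht1, ht2⟩ := Finset.mem_filter.1 ht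
      have htc : t.card = i + 1 := card_of_mem_lev ht1
      obtain ⟨β, hβdiff, hβt, hβu, hβins, hρt⟩ := hEfact t ht
      have himg : ∀ s ∈ (lev F (i+2)).filter (t ⊆ ·),
          tstar u t s ∈ E.filter (fun t₂ => ρ t₂ ≠ ρ t) := by
        intro s hs
        obtain ⟨hs1, hs2⟩ := Finset.mem_filter.1 hs
        have hsc : s.card = i + 2 := card_of_mem_lev hs1
        obtain ⟨α, hαdiff, hαs, hαt, hαins⟩ := diff_singleton hs2 (by omega)
        have hdisj : Disjoint u (s \ t) := by
          refine Finset.disjoint_left.2 fun x hx hx' => ?_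
          exact (Finset.mem_sdiff.1 hx').2 (ht2 hx)
        have htstar : tstar u t s = insert α u := by
          rw [tstar, hαdiff, Finset.union_comm, ← Finset.insert_eq]
        have hcard : (tstar u t s).card = i + 1 := by
          rw [htstar, Finset.card_insert_of_notMem (fun hc => hαt (ht2 hc)), huc]
        have hsub : tstar u t s ⊆ s := by
          rw [tstar]
          exact Finset.union_subset (ht2.trans hs2) (Finset.sdiff_subset)
        have hmem : tstar u t s ∈ lev F (i+1) := subset_mem_lev hs1 hsub hcard
        refine Finset.mem_filter.2 ⟨Finset.mem_filter.2 ⟨hmem, ?_⟩, ?_⟩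
        · rw [tstar]; exact Finset.subset_union_left
        · -- ρ (tstar) = α % r ≠ β % r = ρ t
          have hρstar : ρ (tstar u t s) = α % r := by
            simp only [hρ, tstar]
            rw [Finset.union_sdiff_cancel_left hdisj, hαdiff]; simp
          rw [hρstar, hρt]
          have hαβ : α ≠ β := fun hc => hαt (hc ▸ hβt)
          obtain ⟨f, hf, hsf, -⟩ := mem_lev.1 hs1
          exact hcol f hf α (hsf hαs) β (hsf (hs2 hβt)) hαβ
      have hinj : ∀ s₁ ∈ (lev F (i+2)).filter (t ⊆ ·), ∀ s₂ ∈ (lev F (i+2)).filter (t ⊆ ·),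
          tstar u t s₁ = tstar u t s₂ → s₁ = s₂ := by
        intro s₁ hs₁ s₂ hs₂ heq
        obtain ⟨hs₁1, hs₁2⟩ := Finset.mem_filter.1 hs₁
        obtain ⟨hs₂1, hs₂2⟩ := Finset.mem_filter.1 hs₂
        have hd1 : Disjoint u (s₁ \ t) := Finset.disjoint_left.2
          fun x hx hx' => (Finset.mem_sdiff.1 hx').2 (ht2 hx)
        have hd2 : Disjoint u (s₂ \ t) := Finset.disjoint_left.2
          fun x hx hx' => (Finset.mem_sdiff.1 hx').2 (ht2 hx)
        have : s₁ \ t = s₂ \ t := by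
          have e1 : tstar u t s₁ \ u = s₁ \ t := by
            rw [tstar, Finset.union_sdiff_cancel_left hd1]
          have e2 : tstar u t s₂ \ u = s₂ \ t := by
            rw [tstar, Finset.union_sdiff_cancel_left hd2]
          rw [← e1, ← e2, heq]
        calc s₁ = t ∪ (s₁ \ t) := (Finset.union_sdiff_of_subset hs₁2).symm
          _ = t ∪ (s₂ \ t) := by rw [this]
          _ = s₂ := Finset.union_sdiff_of_subset hs₂2
      calc ∑ s ∈ (lev F (i+2)).filter (t ⊆ ·), h (tstar u t s)
          = ∑ t₂ ∈ ((lev F (i+2)).filter (t ⊆ ·)).image (tstar u t), h t₂ :=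
            (Finset.sum_image hinj).symm
        _ ≤ ∑ t₂ ∈ E.filter (fun t₂ => ρ t₂ ≠ ρ t), h t₂ := by
            apply Finset.sum_le_sum_of_subset_of_nonneg
            · intro t₂ ht₂
              obtain ⟨s, hs, rfl⟩ := Finset.mem_image.1 ht₂
              exact himg s hs
            · intro t₂ _ _; exact hhnn t₂
    -- now the per-u Cauchy–Schwarz argument
    have hp0nn : 0 ≤ P F k i u := P_nonneg _ _
    have hm0 : (0:ℝ) < (m:ℝ) := by exact_mod_cast hm1
    have hSp0 : ∑ t ∈ E, h t = P F k i u := by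
      simp only [hh]
      rw [← Finset.sum_div, hE, KM hsize (by omega) huc]
      field_simp
    set im := E.image ρ with him
    set Q : ℕ → ℝ := fun c => ∑ t ∈ E.filter (fun t => ρ t = c), h t with hQ
    have hQS : ∑ c ∈ im, Q c = ∑ t ∈ E, h t :=
      Finset.sum_fiberwise_of_maps_to (fun t ht => Finset.mem_image_of_mem ρ ht) h
    have hQsq : ∑ t ∈ E, h t * Q (ρ t) = ∑ c ∈ im, Q c ^ 2 := by
      rw [← Finset.sum_fiberwise_of_maps_to (fun t ht => Finset.mem_image_of_mem ρ ht)
        (fun t => h t * Q (ρ t))]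
      apply Finset.sum_congr rfl
      intro c _
      have hc : ∀ t ∈ E.filter (fun t => ρ t = c), h t * Q (ρ t) = h t * Q c := by
        intro t ht; rw [(Finset.mem_filter.1 ht).2]
      rw [Finset.sum_congr rfl hc, ← Finset.sum_mul, sq]
    have hQnn : 0 ≤ ∑ c ∈ im, Q c ^ 2 := Finset.sum_nonneg fun c _ => sq_nonneg _
    -- the image of ρ has at most m+1 elements
    have him_card : (im.card : ℝ) ≤ (m:ℝ) + 1 := by
      have hsub : im ⊆ (Finset.range r) \ (u.image (· % r)) := by
        intro c hc
        obtain ⟨t, ht, rfl⟩ := Finset.mem_image.1 hc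
        obtain ⟨β, hβ1, hβ2, hβ3, hβ4, hβ5⟩ := hEfact t ht
        obtain ⟨ht1, ht2⟩ := Finset.mem_filter.1 ht
        rw [hβ5]
        refine Finset.mem_sdiff.2 ⟨Finset.mem_range.2 (Nat.mod_lt _ hr0), ?_⟩
        intro hmem
        obtain ⟨γ, hγu, hγeq⟩ := Finset.mem_image.1 hmem
        have : γ = β := lev_inj hcol ht1 γ (ht2 hγu) β hβ2 hγeq
        exact hβ3 (this ▸ hγu)
      have h1 : ((Finset.range r) \ (u.image (· % r))).card = r - i := by
        rw [Finset.card_sdiff_of_subset]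
        · rw [Finset.card_image_of_injOn, Finset.card_range, huc]
          intro a ha b hb hab
          exact lev_inj hcol hu a ha b hb hab
        · intro c hc
          obtain ⟨γ, _, rfl⟩ := Finset.mem_image.1 hc
          exact Finset.mem_range.2 (Nat.mod_lt _ hr0)
      have h2 := Finset.card_le_card hsub
      rw [h1] at h2
      have : (im.card : ℝ) ≤ ((r - i : ℕ) : ℝ) := by exact_mod_cast h2
      have h3 : ((r - i : ℕ) : ℝ) = (m:ℝ) + 1 := by
        have : r - i = m + 1 := by omega
        rw [this]; push_cast; ring
      linarith [h3 ▸ this]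
    have hCS : (∑ t ∈ E, h t) ^ 2 ≤ ((m:ℝ)+1) * ∑ c ∈ im, Q c ^ 2 := by
      have hcs := sq_sum_le_card_mul_sum_sq (s := im) (f := Q)
      rw [hQS] at hcs
      calc (∑ t ∈ E, h t) ^ 2 ≤ (im.card : ℝ) * ∑ c ∈ im, Q c ^ 2 := hcs
        _ ≤ ((m:ℝ)+1) * ∑ c ∈ im, Q c ^ 2 := by
          exact mul_le_mul_of_nonneg_right him_card hQnn
    -- bounding the double sum
    have hW : ∑ t ∈ E, ∑ s ∈ (lev F (i+2)).filter (t ⊆ ·), h t * h (tstar u t s)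
        ≤ (∑ t ∈ E, h t) ^ 2 - ∑ c ∈ im, Q c ^ 2 := by
      have hper : ∀ t ∈ E, ∑ s ∈ (lev F (i+2)).filter (t ⊆ ·), h t * h (tstar u t s)
          ≤ h t * ((∑ t' ∈ E, h t') - Q (ρ t)) := by
        intro t ht
        rw [← Finset.mul_sum]
        have hsplit : Q (ρ t) + ∑ t₂ ∈ E.filter (fun t₂ => ρ t₂ ≠ ρ t), h t₂
            = ∑ t' ∈ E, h t' := by
          rw [hQ]
          exact Finset.sum_filter_add_sum_filter_not E (fun t₂ => ρ t₂ = ρ t) h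
        have hb := inner_bound t ht
        have := mul_le_mul_of_nonneg_left hb (hhnn t)
        linarith [this, mul_le_mul_of_nonneg_left (le_of_eq hsplit) (hhnn t)]
      calc ∑ t ∈ E, ∑ s ∈ (lev F (i+2)).filter (t ⊆ ·), h t * h (tstar u t s)
          ≤ ∑ t ∈ E, h t * ((∑ t' ∈ E, h t') - Q (ρ t)) := Finset.sum_le_sum hper
        _ = (∑ t ∈ E, h t) ^ 2 - ∑ c ∈ im, Q c ^ 2 := by
            rw [← hQsq]
            rw [Finset.sum_congr rfl (fun t _ => mul_sub (h t) _ _), Finset.sum_sub_distrib,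
              ← Finset.sum_mul, sq]
    -- conclude
    have hfact : ∀ t ∈ E, ∀ s ∈ (lev F (i+2)).filter (t ⊆ ·),
        h t * h (tstar u t s) / P F k i u * (((m:ℝ)+1)/(m:ℝ))
          = (h t * h (tstar u t s)) * ((((m:ℝ)+1)/(m:ℝ)) / P F k i u) := by
      intro t _ s _; ring
    have hgoal_eq : ∑ t ∈ E, ∑ s ∈ (lev F (i+2)).filter (t ⊆ ·),
        (h t * h (tstar u t s) / P F k i u * (((m:ℝ)+1)/(m:ℝ)))
        = (∑ t ∈ E, ∑ s ∈ (lev F (i+2)).filter (t ⊆ ·), h t * h (tstar u t s))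
            * ((((m:ℝ)+1)/(m:ℝ)) / P F k i u) := by
      rw [Finset.sum_mul]
      apply Finset.sum_congr rfl
      intro t ht
      rw [Finset.sum_mul]
      exact Finset.sum_congr rfl fun s hs => hfact t ht s hs
    rw [hgoal_eq]
    rcases eq_or_lt_of_le hp0nn with h0 | h0
    · -- p0 = 0 : everything vanishes
      have hS0 : ∑ t ∈ E, h t = 0 := by rw [hSp0, ← h0]
      have hz : ∀ t ∈ E, h t = 0 := by
        intro t ht
        have := (Finset.sum_eq_zero_iff_of_nonneg (fun t _ => hhnn t)).1 hS0
        exact this t ht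
      have : ∑ t ∈ E, ∑ s ∈ (lev F (i+2)).filter (t ⊆ ·), h t * h (tstar u t s) = 0 := by
        apply Finset.sum_eq_zero
        intro t ht
        apply Finset.sum_eq_zero
        intro s _
        rw [hz t ht, zero_mul]
      rw [this, zero_mul, ← h0]
    · -- p0 > 0
      have hp0 : P F k i u ≠ 0 := h0.ne'
      have hWnn : 0 ≤ ∑ t ∈ E, ∑ s ∈ (lev F (i+2)).filter (t ⊆ ·), h t * h (tstar u t s) :=
        Finset.sum_nonneg fun t _ => Finset.sum_nonneg fun s _ =>
          mul_nonneg (hhnn t) (hhnn _)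
      have hdp : 0 ≤ ((((m:ℝ)+1)/(m:ℝ)) / P F k i u) := by positivity
      calc (∑ t ∈ E, ∑ s ∈ (lev F (i+2)).filter (t ⊆ ·), h t * h (tstar u t s))
            * ((((m:ℝ)+1)/(m:ℝ)) / P F k i u)
          ≤ ((∑ t ∈ E, h t) ^ 2 - ∑ c ∈ im, Q c ^ 2)
            * ((((m:ℝ)+1)/(m:ℝ)) / P F k i u) :=
            mul_le_mul_of_nonneg_right hW hdp
        _ ≤ ((P F k i u) ^ 2 * ((m:ℝ)/((m:ℝ)+1)))
            * ((((m:ℝ)+1)/(m:ℝ)) / P F k i u) := by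
            apply mul_le_mul_of_nonneg_right _ hdp
            rw [hSp0] at hCS ⊢
            rw [← mul_div_assoc, le_div_iff₀ (by positivity : (0:ℝ) < (m:ℝ)+1)]
            nlinarith [hCS]
        _ = P F k i u := by field_simp
  calc ∑ u ∈ lev F i, ∑ t ∈ (lev F (i+1)).filter (u ⊆ ·),
        ∑ s ∈ (lev F (i+2)).filter (t ⊆ ·), _
      ≤ ∑ u ∈ lev F i, P F k i u := Finset.sum_le_sum key
    _ = 1 := sum_P hsize hF (by omega)

lemma gibbs_term {w p q z cm : ℝ} (hw : 0 ≤ w) (hp : 0 < p) (hq : 0 < q) (hz : 0 < z)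
    (hcm : 0 < cm) :
    w * (Real.log p + Real.log q - Real.log z + Real.log cm)
      ≤ w * Real.log w + (p * q / z * cm - w) := by
  have hv : 0 < p * q / z * cm := by positivity
  have hlog : Real.log (p * q / z * cm)
      = Real.log p + Real.log q - Real.log z + Real.log cm := by
    rw [Real.log_mul (by positivity) hcm.ne', Real.log_div (by positivity) hz.ne',
      Real.log_mul hp.ne' hq.ne']
  have := gibbs_pointwise hw hv.le (fun _ => hv.ne')
  rw [hlog] at this
  linarith [this]

lemma T3_add {i : ℕ} (g₁ g₂ : Finset ℕ → Finset ℕ → Finset ℕ → ℝ) :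
    T3 F k i (fun u t s => g₁ u t s + g₂ u t s) = T3 F k i g₁ + T3 F k i g₂ := by
  unfold T3
  rw [← Finset.sum_add_distrib]
  apply Finset.sum_congr rfl; intro s _
  rw [← Finset.sum_add_distrib]
  apply Finset.sum_congr rfl; intro t _
  rw [← Finset.sum_add_distrib]

lemma T3_sub {i : ℕ} (g₁ g₂ : Finset ℕ → Finset ℕ → Finset ℕ → ℝ) :
    T3 F k i (fun u t s => g₁ u t s - g₂ u t s) = T3 F k i g₁ - T3 F k i g₂ := by
  unfold T3
  rw [← Finset.sum_sub_distrib]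
  apply Finset.sum_congr rfl; intro s _
  rw [← Finset.sum_sub_distrib]
  apply Finset.sum_congr rfl; intro t _
  rw [← Finset.sum_sub_distrib]

lemma T3_mono {i : ℕ} {g₁ g₂ : Finset ℕ → Finset ℕ → Finset ℕ → ℝ}
    (h : ∀ s ∈ lev F (i+2), ∀ t ∈ s.powersetCard (i+1), ∀ u ∈ t.powersetCard i,
      g₁ u t s ≤ g₂ u t s) :
    T3 F k i g₁ ≤ T3 F k i g₂ := by
  unfold T3
  apply Finset.sum_le_sum; intro s hs
  apply Finset.sum_le_sum; intro t ht
  apply Finset.sum_le_sum; intro u hu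
  exact h s hs t ht u hu

lemma T3_wconst {i : ℕ} (hsize : ∀ s ∈ F, s.card = k) (hF : F.Nonempty) (hik : i + 2 ≤ k)
    (C : ℝ) :
    T3 F k i (fun _u _t s => (P F k (i+2) s / (((i:ℝ)+2) * ((i:ℝ)+1))) * C) = C := by
  rw [T3_e]
  set c : ℝ := ((i:ℝ)+2) * ((i:ℝ)+1) with hc
  have hc0 : (0:ℝ) < c := by positivity
  have h1 : ∀ s ∈ lev F (i+2), P F k (i+2) s / c * C = P F k (i+2) s * (C / c) := by
    intro s _; ring
  rw [Finset.sum_congr rfl h1, ← Finset.sum_mul, sum_P hsize hF hik]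
  field_simp

lemma main_ineq {r : ℕ} (hsize : ∀ s ∈ F, s.card = k)
    (hcol : ∀ s ∈ F, ∀ a ∈ s, ∀ b ∈ s, a ≠ b → a % r ≠ b % r)
    (hF : F.Nonempty) {i m : ℕ} (hik : i + 2 ≤ k) (hm : i + 1 + m = r) (hm1 : 1 ≤ m) :
    HH F k (i+2) + HH F k i + Real.log ((i:ℝ)+2) + Real.log ((m:ℝ)+1)
      ≤ 2 * HH F k (i+1) + Real.log ((i:ℝ)+1) + Real.log (m:ℝ) := by
  have hm0 : (0:ℝ) < (m:ℝ) := by exact_mod_cast hm1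
  set c : ℝ := ((i:ℝ)+2) * ((i:ℝ)+1) with hc
  have hc0 : (0:ℝ) < c := by positivity
  -- pointwise Gibbs bound
  have hpoint : ∀ s ∈ lev F (i+2), ∀ t ∈ s.powersetCard (i+1), ∀ u ∈ t.powersetCard i,
      (P F k (i+2) s / c) *
          (Real.log (P F k (i+1) t / ((i:ℝ)+1))
            + Real.log (P F k (i+1) (tstar u t s) / ((i:ℝ)+1))
            - Real.log (P F k i u) + Real.log (((m:ℝ)+1)/(m:ℝ)))
        ≤ (P F k (i+2) s / c) * Real.log (P F k (i+2) s / c)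
          + ((P F k (i+1) t / ((i:ℝ)+1)) * (P F k (i+1) (tstar u t s) / ((i:ℝ)+1))
              / P F k i u * (((m:ℝ)+1)/(m:ℝ))
            - P F k (i+2) s / c) := by
    intro s hs t ht u hu
    obtain ⟨hts, htc⟩ := Finset.mem_powersetCard.1 ht
    obtain ⟨hut, huc⟩ := Finset.mem_powersetCard.1 hu
    have hsc : s.card = i + 2 := card_of_mem_lev hs
    have htlev : t ∈ lev F (i+1) := subset_mem_lev hs hts htc
    have hulev : u ∈ lev F i := subset_mem_lev hs (hut.trans hts) huc
    -- tstar facts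
    obtain ⟨α, hαdiff, hαs, hαt, hαins⟩ := diff_singleton hts (by omega)
    have hdisj : Disjoint u (s \ t) := Finset.disjoint_left.2
      fun x hx hx' => (Finset.mem_sdiff.1 hx').2 (hut hx)
    have htstar : tstar u t s = insert α u := by
      rw [tstar, hαdiff, Finset.union_comm, ← Finset.insert_eq]
    have hstarc : (tstar u t s).card = i + 1 := by
      rw [htstar, Finset.card_insert_of_notMem (fun hcon => hαt (hut hcon)), huc]
    have hstars : tstar u t s ⊆ s := by
      rw [tstar]
      exact Finset.union_subset ((hut.trans hts).trans (Finset.Subset.refl s)) Finset.sdiff_subset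
    have hstarlev : tstar u t s ∈ lev F (i+1) := subset_mem_lev hs hstars hstarc
    rcases eq_or_ne (P F k (i+2) s) 0 with h0 | h0
    · rw [h0]
      simp only [zero_div, zero_mul, Real.log_zero, mul_zero, zero_add, sub_zero, zero_sub]
      have : 0 ≤ (P F k (i+1) t / ((i:ℝ)+1)) * (P F k (i+1) (tstar u t s) / ((i:ℝ)+1))
          / P F k i u * (((m:ℝ)+1)/(m:ℝ)) := by
        have h1 := P_nonneg (F := F) (k := k) (i+1) t
        have h2 := P_nonneg (F := F) (k := k) (i+1) (tstar u t s)
        have h3 := P_nonneg (F := F) (k := k) i u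
        positivity
      linarith [this]
    · have hP2 : 0 < P F k (i+2) s := lt_of_le_of_ne (P_nonneg _ _) (Ne.symm h0)
      have hcoef1 : (0:ℝ) < ((i+1:ℕ):ℝ) + 1 := by positivity
      have hp1t : 0 < P F k (i+1) t := by
        have hle := P_le_succ hsize (j := i+1) (by omega) htc hs hts
        nlinarith [P_nonneg (F := F) (k := k) (i+1) t, hle, hP2, hcoef1]
      have hp1star : 0 < P F k (i+1) (tstar u t s) := by
        have hle := P_le_succ hsize (j := i+1) (by omega) hstarc hs hstars
        nlinarith [P_nonneg (F := F) (k := k) (i+1) (tstar u t s), hle, hP2, hcoef1]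
      have hcoef0 : (0:ℝ) < ((i:ℕ):ℝ) + 1 := by positivity
      have hp0u : 0 < P F k i u := by
        have hle := P_le_succ hsize (j := i) (by omega) huc htlev hut
        nlinarith [P_nonneg (F := F) (k := k) i u, hle, hp1t, hcoef0]
      exact gibbs_term (by positivity) (by positivity) (by positivity) hp0u (by positivity)
  -- sum the pointwise bound
  have hsum := T3_mono (F := F) (k := k) hpoint
  -- compute left side
  have hL : T3 F k i (fun u t s =>
      (P F k (i+2) s / c) *
          (Real.log (P F k (i+1) t / ((i:ℝ)+1))
            + Real.log (P F k (i+1) (tstar u t s) / ((i:ℝ)+1))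
            - Real.log (P F k i u) + Real.log (((m:ℝ)+1)/(m:ℝ))))
      = (- HH F k (i+1) - Real.log ((i:ℝ)+1)) + (- HH F k (i+1) - Real.log ((i:ℝ)+1))
        - (- HH F k i) + Real.log (((m:ℝ)+1)/(m:ℝ)) := by
    have hexp : ∀ u t s : Finset ℕ, (P F k (i+2) s / c) *
          (Real.log (P F k (i+1) t / ((i:ℝ)+1))
            + Real.log (P F k (i+1) (tstar u t s) / ((i:ℝ)+1))
            - Real.log (P F k i u) + Real.log (((m:ℝ)+1)/(m:ℝ)))
        = (((P F k (i+2) s / c) * Real.log (P F k (i+1) t / ((i:ℝ)+1))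
            + (P F k (i+2) s / c) * Real.log (P F k (i+1) (tstar u t s) / ((i:ℝ)+1)))
            - (P F k (i+2) s / c) * Real.log (P F k i u))
            + (P F k (i+2) s / c) * Real.log (((m:ℝ)+1)/(m:ℝ)) := by
      intro u t s; ring
    calc T3 F k i _ = T3 F k i (fun u t s =>
        (((P F k (i+2) s / c) * Real.log (P F k (i+1) t / ((i:ℝ)+1))
            + (P F k (i+2) s / c) * Real.log (P F k (i+1) (tstar u t s) / ((i:ℝ)+1)))
            - (P F k (i+2) s / c) * Real.log (P F k i u))
            + (P F k (i+2) s / c) * Real.log (((m:ℝ)+1)/(m:ℝ))) := by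
          unfold T3
          exact Finset.sum_congr rfl fun s _ => Finset.sum_congr rfl fun t _ =>
            Finset.sum_congr rfl fun u _ => hexp u t s
      _ = (- HH F k (i+1) - Real.log ((i:ℝ)+1)) + (- HH F k (i+1) - Real.log ((i:ℝ)+1))
        - (- HH F k i) + Real.log (((m:ℝ)+1)/(m:ℝ)) := by
          rw [T3_add, T3_sub, T3_add]
          rw [T3_piece1 hsize hF hik, T3_piece3 hsize hF hik,
            T3_sym (fun s => P F k (i+2) s / c) (fun t => Real.log (P F k (i+1) t / ((i:ℝ)+1))),
            T3_piece1 hsize hF hik, T3_wconst hsize hF hik]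
  -- compute right side
  have hR : T3 F k i (fun u t s =>
      (P F k (i+2) s / c) * Real.log (P F k (i+2) s / c)
          + ((P F k (i+1) t / ((i:ℝ)+1)) * (P F k (i+1) (tstar u t s) / ((i:ℝ)+1))
              / P F k i u * (((m:ℝ)+1)/(m:ℝ))
            - P F k (i+2) s / c))
      ≤ (- HH F k (i+2) - Real.log c) + (1 - 1) := by
    rw [T3_add, T3_sub, T3_wlogw hsize hF hik, T3_w hsize hF hik]
    have := T3_v_le hsize hcol hF hik hm hm1
    linarith [this]
  have hfinal := le_trans hsum hR
  rw [hL] at hfinal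
  have hlogc : Real.log c = Real.log ((i:ℝ)+2) + Real.log ((i:ℝ)+1) := by
    rw [hc, Real.log_mul (by positivity) (by positivity)]
  have hlogm : Real.log (((m:ℝ)+1)/(m:ℝ)) = Real.log ((m:ℝ)+1) - Real.log (m:ℝ) := by
    rw [Real.log_div (by positivity) (by positivity)]
  rw [hlogc, hlogm] at hfinal
  linarith [hfinal]

noncomputable def dd (F : Finset (Finset ℕ)) (k r : ℕ) (x : ℝ) (i : ℕ) : ℝ :=
  Real.log ((r - i : ℕ) : ℝ) + Real.log x + HH F k i - HH F k (i+1) - Real.log ((i:ℝ)+1)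

lemma HH_zero (hF : F.Nonempty) : HH F k 0 = 0 := by
  have hlev : lev F 0 = {∅} := by
    ext t
    rw [mem_lev]
    simp only [Finset.card_eq_zero, Finset.mem_singleton]
    constructor
    · rintro ⟨s, _, _, h⟩; exact h
    · rintro rfl
      obtain ⟨s, hs⟩ := hF
      exact ⟨s, hs, Finset.empty_subset s, rfl⟩
  have hdeg : deg F ∅ = F.card := by
    unfold deg
    congr 1
    exact Finset.filter_true_of_mem fun s _ => Finset.empty_subset s
  unfold HH
  rw [hlev, Finset.sum_singleton]
  have hP : P F k 0 ∅ = 1 := by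
    unfold P
    rw [hdeg, Nat.choose_zero_right]
    have hb : (F.card : ℝ) ≠ 0 := by
      have := Finset.card_pos.2 hF; positivity
    push_cast
    field_simp
  rw [hP, Real.negMulLog_one]

lemma log_choose {r N : ℕ} (hN : N ≤ r) :
    Real.log (r.choose N : ℝ)
      = ∑ i ∈ Finset.range N, (Real.log ((r - i : ℕ) : ℝ) - Real.log ((i:ℝ)+1)) := by
  induction N with
  | zero => simp
  | succ N ih =>
    have hNr : N < r := by omega
    rw [Finset.sum_range_succ, ← ih (by omega)]
    have hcast : (r.choose (N+1) : ℝ) * ((N:ℝ)+1) = (r.choose N : ℝ) * ((r - N : ℕ) : ℝ) := by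
      have h2 : ((r.choose (N+1)) * (N+1) : ℕ) = ((r.choose N) * (r - N) : ℕ) :=
        Nat.choose_succ_right_eq r N
      have h3 := congrArg (Nat.cast (R := ℝ)) h2
      push_cast at h3
      linear_combination h3
    have hc1 : (0:ℝ) < (r.choose (N+1) : ℝ) := by
      exact_mod_cast Nat.choose_pos (by omega : N + 1 ≤ r)
    have hc0 : (0:ℝ) < (r.choose N : ℝ) := by
      exact_mod_cast Nat.choose_pos hNr.le
    have hrN : (0:ℝ) < ((r - N : ℕ) : ℝ) := by
      have : 0 < r - N := by omega
      exact_mod_cast this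
    have hN1 : (0:ℝ) < (N:ℝ)+1 := by positivity
    have hlogs := congrArg Real.log hcast
    rw [Real.log_mul hc1.ne' hN1.ne', Real.log_mul hc0.ne' hrN.ne'] at hlogs
    linarith [hlogs]

lemma sum_dd (hsize : ∀ s ∈ F, s.card = k) (hF : F.Nonempty) {r : ℕ} {x : ℝ} {N : ℕ}
    (hN : N ≤ k) (hrk : k ≤ r) :
    ∑ i ∈ Finset.range N, dd F k r x i
      = Real.log (r.choose N : ℝ) + N * Real.log x - HH F k N := by
  have hexp : ∀ i, dd F k r x i
      = (Real.log ((r - i : ℕ) : ℝ) - Real.log ((i:ℝ)+1)) + Real.log x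
        + (HH F k i - HH F k (i+1)) := by
    intro i; unfold dd; ring
  rw [Finset.sum_congr rfl (fun i _ => hexp i), Finset.sum_add_distrib,
    Finset.sum_add_distrib, ← log_choose (by omega), Finset.sum_const,
    Finset.card_range, nsmul_eq_mul]
  have htel : ∑ i ∈ Finset.range N, (HH F k i - HH F k (i+1)) = HH F k 0 - HH F k N :=
    Finset.sum_range_sub' (fun i => HH F k i) N
  rw [htel, HH_zero hF]
  ring

lemma dd_mono {r : ℕ} (hsize : ∀ s ∈ F, s.card = k)
    (hcol : ∀ s ∈ F, ∀ a ∈ s, ∀ b ∈ s, a ≠ b → a % r ≠ b % r)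
    (hF : F.Nonempty) {x : ℝ} {i : ℕ} (hik : i + 2 ≤ k) (hrk : k ≤ r) :
    dd F k r x i ≤ dd F k r x (i+1) := by
  set m := r - (i+1) with hmdef
  have hm : i + 1 + m = r := by omega
  have hm1 : 1 ≤ m := by omega
  have hmain := main_ineq hsize hcol hF hik hm hm1
  unfold dd
  have e1 : ((r - i : ℕ) : ℝ) = (m:ℝ) + 1 := by
    have : r - i = m + 1 := by omega
    rw [this]; push_cast; ring
  have e2 : ((r - (i+1) : ℕ) : ℝ) = (m:ℝ) := by rw [← hmdef]
  have e3 : (((i+1 : ℕ)):ℝ) + 1 = (i:ℝ) + 2 := by push_cast; ring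
  rw [e1, e2]
  push_cast
  push_cast at hmain
  have e4 : Real.log ((i:ℝ)+1+1) = Real.log ((i:ℝ)+2) := by ring_nf
  have e5 : HH F k (i+1+1) = HH F k (i+2) := rfl
  linarith [hmain, e4, e5]

lemma dd_mono' {r : ℕ} (hsize : ∀ s ∈ F, s.card = k)
    (hcol : ∀ s ∈ F, ∀ a ∈ s, ∀ b ∈ s, a ≠ b → a % r ≠ b % r)
    (hF : F.Nonempty) {x : ℝ} (hrk : k ≤ r) :
    ∀ i j : ℕ, i ≤ j → j + 1 ≤ k → dd F k r x i ≤ dd F k r x j := by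
  intro i j hij hjk
  induction j with
  | zero => have : i = 0 := by omega
            rw [this]
  | succ j ihj =>
    rcases Nat.lt_or_ge i (j+1) with h | h
    · have h1 : dd F k r x i ≤ dd F k r x j := ihj (by omega) (by omega)
      have h2 : dd F k r x j ≤ dd F k r x (j+1) := dd_mono hsize hcol hF (by omega) hrk
      linarith
    · have : i = j + 1 := by omega
      rw [this]

lemma prefix_nonpos {r : ℕ} (hsize : ∀ s ∈ F, s.card = k)
    (hcol : ∀ s ∈ F, ∀ a ∈ s, ∀ b ∈ s, a ≠ b → a % r ≠ b % r)
    (hF : F.Nonempty) {x : ℝ} (hrk : k ≤ r) {ℓ : ℕ} (hℓk : ℓ ≤ k) (hk0 : 0 < k)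
    (hsum0 : ∑ i ∈ Finset.range k, dd F k r x i = 0) :
    ∑ i ∈ Finset.range ℓ, dd F k r x i ≤ 0 := by
  rcases eq_or_lt_of_le hℓk with rfl | hℓk'
  · linarith [hsum0]
  · have hAB : (∑ i ∈ Finset.range ℓ, dd F k r x i) + ∑ i ∈ Finset.Ico ℓ k, dd F k r x i
        = 0 := by
      rw [Finset.sum_range_add_sum_Ico _ hℓk]
      exact hsum0
    have hA : ∑ i ∈ Finset.range ℓ, dd F k r x i ≤ ℓ • dd F k r x ℓ := by
      have := Finset.sum_le_card_nsmul (Finset.range ℓ) (dd F k r x) (dd F k r x ℓ)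
        (fun i hi => dd_mono' hsize hcol hF hrk i ℓ
          (le_of_lt (Finset.mem_range.1 hi)) (by omega))
      simpa [Finset.card_range] using this
    have hB : (k - ℓ) • dd F k r x ℓ ≤ ∑ i ∈ Finset.Ico ℓ k, dd F k r x i := by
      have := Finset.card_nsmul_le_sum (Finset.Ico ℓ k) (dd F k r x) (dd F k r x ℓ)
        (fun i hi => dd_mono' hsize hcol hF hrk ℓ i
          (Finset.mem_Ico.1 hi).1 (by have := (Finset.mem_Ico.1 hi).2; omega))
      simpa [Nat.card_Ico] using this
    rw [nsmul_eq_mul] at hA hB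
    rcases le_or_gt (dd F k r x ℓ) 0 with hd | hd
    · have : (ℓ:ℝ) * dd F k r x ℓ ≤ 0 :=
        mul_nonpos_of_nonneg_of_nonpos (by positivity) hd
      linarith
    · have hkl : (0:ℝ) < ((k - ℓ : ℕ) : ℝ) := by
        have : 0 < k - ℓ := by omega
        exact_mod_cast this
      have : (0:ℝ) < ((k - ℓ : ℕ) : ℝ) * dd F k r x ℓ := by positivity
      linarith
lemma HH_le_log (hsize : ∀ s ∈ F, s.card = k) (hF : F.Nonempty) {j : ℕ} (hj : j ≤ k) :
    HH F k j ≤ Real.log ((lev F j).card : ℝ) :=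
  sum_negMulLog_le_log_card (fun t _ => P_nonneg _ _) (sum_P hsize hF hj)

lemma lev_nonempty (hsize : ∀ s ∈ F, s.card = k) (hF : F.Nonempty) {j : ℕ} (hj : j ≤ k) :
    (lev F j).Nonempty := by
  obtain ⟨s, hs⟩ := hF
  obtain ⟨t, hts, htc⟩ := Finset.exists_subset_card_eq (s := s) (n := j) (by rw [hsize s hs]; exact hj)
  exact ⟨t, mem_lev.2 ⟨s, hs, hts, htc⟩⟩

end FFK

theorem stmt_10 (r k ℓ : ℕ) (hℓ : 1 ≤ ℓ) (hℓk : ℓ ≤ k) (hkr : k ≤ r)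
    (F : Finset (Finset ℕ))
    (hsize : ∀ s ∈ F, s.card = k)
    (hcol : ∀ s ∈ F, ∀ a ∈ s, ∀ b ∈ s, a ≠ b → a % r ≠ b % r)
    (x : ℝ) (hx : 0 ≤ x)
    (hcard : (F.card : ℝ) = (Nat.choose r k : ℝ) * x ^ k) :
    (Nat.choose r ℓ : ℝ) * x ^ ℓ ≤
      ({t : Finset ℕ | t.card = ℓ ∧ ∃ s ∈ F, t ⊆ s}.ncard : ℝ) := by
  classical
  have hk0 : 0 < k := by omega
  have hchoosek : (0:ℝ) < (r.choose k : ℝ) := by exact_mod_cast Nat.choose_pos hkr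
  have hchooseℓ : (0:ℝ) < (r.choose ℓ : ℝ) := by exact_mod_cast Nat.choose_pos (hℓk.trans hkr)
  have hset : {t : Finset ℕ | t.card = ℓ ∧ ∃ s ∈ F, t ⊆ s} = ↑(FFK.lev F ℓ) := by
    ext t
    simp only [Set.mem_setOf_eq, Finset.mem_coe, FFK.mem_lev]
    constructor
    · rintro ⟨h1, s, hs, h2⟩; exact ⟨s, hs, h2, h1⟩
    · rintro ⟨s, hs, h2, h1⟩; exact ⟨h1, s, hs, h2⟩
  rw [hset, Set.ncard_coe_finset]
  rcases F.eq_empty_or_nonempty with rfl | hF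
  · have hxk : x ^ k = 0 := by
      have h0 : (0:ℝ) = (r.choose k : ℝ) * x ^ k := by simpa using hcard
      rcases mul_eq_zero.1 h0.symm with h | h
      · exact absurd h hchoosek.ne'
      · exact h
    have hx0 : x = 0 := pow_eq_zero_iff hk0.ne' |>.1 hxk
    rw [hx0, zero_pow (by omega : ℓ ≠ 0), mul_zero]
    positivity
  · have hFc : (0:ℝ) < F.card := by exact_mod_cast Finset.card_pos.2 hF
    have hx0 : 0 < x := by
      rcases eq_or_lt_of_le hx with rfl | h
      · exfalso
        rw [zero_pow hk0.ne', mul_zero] at hcard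
        linarith
      · exact h
    have hHHk : FFK.HH F k k = Real.log (r.choose k : ℝ) + k * Real.log x := by
      rw [FFK.HH_top hsize hF, hcard, Real.log_mul hchoosek.ne' (by positivity),
        Real.log_pow]
    have hsum0 : ∑ i ∈ Finset.range k, FFK.dd F k r x i = 0 := by
      rw [FFK.sum_dd hsize hF le_rfl hkr, hHHk]; ring
    have hpre := FFK.prefix_nonpos hsize hcol hF hkr hℓk hk0 hsum0
    rw [FFK.sum_dd hsize hF hℓk hkr] at hpre
    have hcardpos : (0:ℝ) < ((FFK.lev F ℓ).card : ℝ) := by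
      exact_mod_cast Finset.card_pos.2 (FFK.lev_nonempty hsize hF hℓk)
    have h1 : Real.log ((r.choose ℓ : ℝ) * x ^ ℓ) ≤ Real.log ((FFK.lev F ℓ).card : ℝ) := by
      rw [Real.log_mul hchooseℓ.ne' (by positivity), Real.log_pow]
      have h2 := FFK.HH_le_log hsize hF hℓk
      linarith [hpre, h2]
    exact (Real.log_le_log_iff (by positivity) hcardpos).1 h1
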